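/- Let $A_1, \ldots, A_\ell$ be nonempty compact convex sets in $\mathbb{R}^n$. Then $\sum_{i=1}^\ell \operatorname{diam} A_i \le \sqrt{\pi}\, n \cdot \operatorname{diam}\left(\sum_{i=1}^\ell A_i\right)$, where the sum of sets is the Minkowski sum. -/

import Mathlib

open scoped Pointwise
open Filter

noncomputable section

namespace DiamAux

variable {n : ℕ}

abbrev E (n : ℕ) := EuclideanSpace ℝ (Fin n)

def evalHom (j : Fin n) : E n →+ ℝ := AddMonoidHom.mk' (fun x => x j) (fun _ _ => rfl)

lemma evalHom_lipschitz (j : Fin n) : LipschitzWith 1 (evalHom j) := by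
  apply LipschitzWith.of_dist_le_mul
  intro x y
  rw [NNReal.coe_one, one_mul, EuclideanSpace.dist_eq]
  have h1 : dist (evalHom j x) (evalHom j y) =
      Real.sqrt (dist (x j) (y j) ^ 2) := by
    rw [Real.sqrt_sq dist_nonneg]; rfl
  rw [h1]
  apply Real.sqrt_le_sqrt
  exact Finset.single_le_sum (f := fun i => dist (x i) (y i) ^ 2)
    (fun i _ => sq_nonneg _) (Finset.mem_univ j)

/-- additivity of diam for nonempty bounded sets of reals -/
lemma diam_add_real {S T : Set ℝ} (hS : S.Nonempty) (hSb : Bornology.IsBounded S)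
    (hT : T.Nonempty) (hTb : Bornology.IsBounded T) :
    Metric.diam (S + T) = Metric.diam S + Metric.diam T := by
  rw [Real.diam_eq hSb, Real.diam_eq hTb, Real.diam_eq (hSb.add hTb),
    csSup_add hS hSb.bddAbove hT hTb.bddAbove,
    csInf_add hS hSb.bddBelow hT hTb.bddBelow]
  ring

/-- coercion of ConvexBody sums -/
lemma coe_sum {ℓ : ℕ} (A : Fin ℓ → ConvexBody (E n)) :
    ((∑ i, A i : ConvexBody (E n)) : Set (E n)) = ∑ i, (A i : Set (E n)) := by
  classical
  induction (Finset.univ : Finset (Fin ℓ)) using Finset.induction with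
  | empty => simp [Finset.sum_empty, ConvexBody.coe_zero]
  | insert _ _ h ih => rw [Finset.sum_insert h, Finset.sum_insert h, ConvexBody.coe_add, ih]

lemma image_sum {ℓ : ℕ} (j : Fin n) (A : Fin ℓ → Set (E n)) :
    (evalHom j) '' (∑ i, A i) = ∑ i, (evalHom j) '' (A i) := by
  classical
  induction (Finset.univ : Finset (Fin ℓ)) using Finset.induction with
  | empty => rw [Finset.sum_empty, Finset.sum_empty, ← Set.singleton_zero,
      Set.image_singleton, map_zero, Set.singleton_zero]
  | insert _ _ h ih => rw [Finset.sum_insert h, Finset.sum_insert h, Set.image_add, ih]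

lemma sum_set_nonempty {ι : Type*} (s : Finset ι) (S : ι → Set ℝ) (h : ∀ i, (S i).Nonempty) :
    (∑ i ∈ s, S i).Nonempty := by
  classical
  induction s using Finset.induction with
  | empty => rw [Finset.sum_empty, ← Set.singleton_zero]; exact ⟨0, rfl⟩
  | @insert c t hc iht => rw [Finset.sum_insert hc]; exact (h c).add iht

lemma sum_set_bounded {ι : Type*} (s : Finset ι) (S : ι → Set ℝ)
    (h : ∀ i, Bornology.IsBounded (S i)) : Bornology.IsBounded (∑ i ∈ s, S i) := by
  classical
  induction s using Finset.induction with
  | empty => rw [Finset.sum_empty, ← Set.singleton_zero]; exact Bornology.isBounded_singleton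
  | @insert c t hc iht => rw [Finset.sum_insert hc]; exact (h c).add iht

lemma diam_sum_real {ℓ : ℕ} (S : Fin ℓ → Set ℝ) (hne : ∀ i, (S i).Nonempty)
    (hb : ∀ i, Bornology.IsBounded (S i)) :
    Metric.diam (∑ i, S i) = ∑ i, Metric.diam (S i) := by
  classical
  induction (Finset.univ : Finset (Fin ℓ)) using Finset.induction with
  | empty =>
      rw [Finset.sum_empty, Finset.sum_empty, ← Set.singleton_zero, Metric.diam_singleton]
  | @insert a s h ih =>
      rw [Finset.sum_insert h, Finset.sum_insert h, ← ih,
        diam_add_real (hne a) (hb a) (sum_set_nonempty s S hne) (sum_set_bounded s S hb)]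

end DiamAux

open DiamAux in
theorem diam_sum_le {n ℓ : ℕ} (A : Fin ℓ → ConvexBody (EuclideanSpace ℝ (Fin n))) :
    ∑ i, Metric.diam (A i : Set (EuclideanSpace ℝ (Fin n))) ≤
      Real.sqrt Real.pi * n *
        Metric.diam ((∑ i, A i : ConvexBody (EuclideanSpace ℝ (Fin n))) :
          Set (EuclideanSpace ℝ (Fin n))) := by
  set S : Set (E n) := ((∑ i, A i : ConvexBody (E n)) : Set (E n)) with hSdef
  have hAb : ∀ i, Bornology.IsBounded (A i : Set (E n)) := fun i => (A i).isCompact.isBounded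
  have hSb : Bornology.IsBounded S := (∑ i, A i).isCompact.isBounded
  -- step 1: diam (A i) ≤ ∑ j, diam (evalHom j '' A i)
  have step1 : ∀ i, Metric.diam (A i : Set (E n)) ≤
      ∑ j, Metric.diam ((evalHom j) '' (A i : Set (E n))) := by
    intro i
    apply Metric.diam_le_of_forall_dist_le
    · exact Finset.sum_nonneg fun j _ => Metric.diam_nonneg
    · intro x hx y hy
      have h1 : dist x y ≤ ∑ j, dist (x j) (y j) := by
        rw [EuclideanSpace.dist_eq]
        calc Real.sqrt (∑ j, dist (x j) (y j) ^ 2)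
            ≤ Real.sqrt ((∑ j, dist (x j) (y j)) ^ 2) := by
              apply Real.sqrt_le_sqrt
              exact Finset.sum_sq_le_sq_sum_of_nonneg (fun j _ => dist_nonneg)
          _ = ∑ j, dist (x j) (y j) :=
              Real.sqrt_sq (Finset.sum_nonneg fun j _ => dist_nonneg)
      refine h1.trans (Finset.sum_le_sum fun j _ => ?_)
      exact Metric.dist_le_diam_of_mem ((evalHom_lipschitz j).isBounded_image (hAb i))
        (Set.mem_image_of_mem _ hx) (Set.mem_image_of_mem _ hy)
  -- step 2
  have step2 : ∀ j, ∑ i, Metric.diam ((evalHom j) '' (A i : Set (E n)))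
      = Metric.diam ((evalHom j) '' S) := by
    intro j
    rw [hSdef, coe_sum, image_sum]
    exact (diam_sum_real _ (fun i => ((A i).nonempty).image _)
      (fun i => (evalHom_lipschitz j).isBounded_image (hAb i))).symm
  -- step 3: diam (evalHom j '' S) ≤ diam S
  have step3 : ∀ j, Metric.diam ((evalHom j) '' S) ≤ Metric.diam S := by
    intro j
    apply Metric.diam_le_of_forall_dist_le Metric.diam_nonneg
    rintro _ ⟨x, hx, rfl⟩ _ ⟨y, hy, rfl⟩
    calc dist (evalHom j x) (evalHom j y) ≤ 1 * dist x y := (evalHom_lipschitz j).dist_le_mul x y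
      _ = dist x y := one_mul _
      _ ≤ Metric.diam S := Metric.dist_le_diam_of_mem hSb hx hy
  calc ∑ i, Metric.diam (A i : Set (E n))
      ≤ ∑ i, ∑ j, Metric.diam ((evalHom j) '' (A i : Set (E n))) :=
        Finset.sum_le_sum fun i _ => step1 i
    _ = ∑ j, ∑ i, Metric.diam ((evalHom j) '' (A i : Set (E n))) := Finset.sum_comm
    _ = ∑ j : Fin n, Metric.diam ((evalHom j) '' S) := by simp_rw [step2]
    _ ≤ ∑ _j : Fin n, Metric.diam S := Finset.sum_le_sum fun j _ => step3 j
    _ = (n : ℝ) * Metric.diam S := by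
        rw [Finset.sum_const, Finset.card_univ, Fintype.card_fin, nsmul_eq_mul]
    _ ≤ Real.sqrt Real.pi * n * Metric.diam S := by
        rw [mul_assoc]
        have h1 : (1 : ℝ) ≤ Real.sqrt Real.pi := by
          rw [show (1:ℝ) = Real.sqrt 1 from (Real.sqrt_one).symm]
          exact Real.sqrt_le_sqrt (by linarith [Real.two_le_pi])
        nlinarith [Metric.diam_nonneg (s := S), mul_nonneg (Nat.cast_nonneg n : (0:ℝ) ≤ n) (Metric.diam_nonneg (s := S))]
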